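/- Let 𝒢 be a graph covering with minimal inverse limit system (V_𝒢, f). Then for every n ≥ 0 there exists m > n such that every circuit c of G_m satisfies V(φ_{m,n}(c)) = V(G_n). -/
import Mathlib


/-- The edge relation is surjective: every vertex has an incoming and outgoing edge. -/
def IsSurjRel {V : Type*} (E : Set (V × V)) : Prop :=
  ∀ v : V, (∃ u, (u, v) ∈ E) ∧ (∃ u, (v, u) ∈ E)

/-- A cover: a positively directional edge-surjective graph homomorphism. -/
def IsCover {V₁ V₂ : Type*} (E₁ : Set (V₁ × V₁)) (E₂ : Set (V₂ × V₂))
    (φ : V₁ → V₂) : Prop :=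
  (∀ u v : V₁, (u, v) ∈ E₁ → (φ u, φ v) ∈ E₂) ∧
  ((fun e : V₁ × V₁ => (φ e.1, φ e.2)) '' E₁ = E₂) ∧
  (∀ u v v' : V₁, (u, v) ∈ E₁ → (u, v') ∈ E₁ → φ v = φ v')

/-- A graph covering: a sequence of covers `φ i : G (i+1) → G i` between finite
directed surjective graphs, with `G 0` a singleton graph. -/
structure GraphCovering (V : ℕ → Type*) where
  E : ∀ i, Set (V i × V i)
  φ : ∀ i, V (i + 1) → V i
  surj : ∀ i, IsSurjRel (E i)
  cover : ∀ i, IsCover (E (i + 1)) (E i) (φ i)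
  single : Subsingleton (V 0)
  nonempty₀ : Nonempty (V 0)

/-- The inverse limit vertex set of a graph covering. -/
def GraphCovering.limitSet {V : ℕ → Type*} (G : GraphCovering V) :
    Set (∀ i, V i) :=
  { x | ∀ i, x i = G.φ i (x (i + 1)) }

/-- The composed covering map `φ_{m,n} : V m → V n` for `n ≤ m`. -/
def compMap {V : ℕ → Type*} (φ : ∀ i, V (i + 1) → V i) :
    ∀ {n m : ℕ}, n ≤ m → V m → V n :=
  fun {n} {m} h =>
    Nat.leRecOn (C := fun k => V k → V n) h
      (fun {k} ih x => ih (φ k x)) id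

/-- A circuit of period `l` in the graph with edge set `E`. -/
def IsCircuit {V : Type*} (E : Set (V × V)) (l : ℕ) (c : ℕ → V) : Prop :=
  1 ≤ l ∧ c l = c 0 ∧ (∀ i < l, (c i, c (i + 1)) ∈ E) ∧
    ∀ i < l, ∀ j < l, c i = c j → i = j

section Aux
variable {V : ℕ → Type*}

lemma compMap_self (φ : ∀ i, V (i + 1) → V i) {n : ℕ} (h : n ≤ n) (x : V n) :
    compMap φ h x = x := by
  unfold compMap
  exact congrFun (Nat.leRecOn_self (C := fun k => V k → V n)
    (next := fun {k} ih x => ih (φ k x)) id) x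

lemma compMap_succ_top (φ : ∀ i, V (i + 1) → V i) {n m : ℕ} (h : n ≤ m) (h2 : n ≤ m + 1)
    (x : V (m + 1)) : compMap φ h2 x = compMap φ h (φ m x) := by
  unfold compMap
  exact congrFun (Nat.leRecOn_succ (C := fun k => V k → V n)
    (next := fun {k} ih x => ih (φ k x)) h id) x

lemma compMap_succ_bot (φ : ∀ i, V (i + 1) → V i) {n m : ℕ} (h : n + 1 ≤ m) (h2 : n ≤ m)
    (x : V m) : φ n (compMap φ h x) = compMap φ h2 x := by
  induction m, h using Nat.le_induction with
  | base => rw [compMap_self, compMap_succ_top φ (le_refl n), compMap_self]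
  | succ m hm ih => rw [compMap_succ_top φ hm, compMap_succ_top φ (by omega), ih]

namespace GraphCovering
variable (G : GraphCovering V)

lemma phi_surj (i : ℕ) (w : V i) : ∃ z, G.φ i z = w := by
  obtain ⟨u, hu⟩ := (G.surj i w).1
  rw [← (G.cover i).2.1] at hu
  obtain ⟨e, _, heq⟩ := hu
  exact ⟨e.2, congrArg Prod.snd heq⟩

/-- The itinerary map: `tau i u` is the common `φ`-image of all out-neighbours of `u`. -/
noncomputable def tau (i : ℕ) (u : V (i + 1)) : V i :=
  G.φ i ((G.surj (i + 1) u).2.choose)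

lemma tau_eq (i : ℕ) (u w : V (i + 1)) (hw : (u, w) ∈ G.E (i + 1)) :
    G.tau i u = G.φ i w :=
  (G.cover i).2.2 u _ w (G.surj (i + 1) u).2.choose_spec hw

lemma limit_coe {x : ∀ i, V i} (hx : x ∈ G.limitSet) {n m : ℕ} (h : n ≤ m) :
    x n = compMap G.φ h (x m) := by
  induction m, h using Nat.le_induction with
  | base => rw [compMap_self]
  | succ m hm ih => rw [compMap_succ_top G.φ hm, ← hx m]; exact ih

lemma exists_limit_point (m : ℕ) (u : V m) : ∃ x ∈ G.limitSet, x m = u := by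
  classical
  let z : ∀ j, V (m + j) := fun j => Nat.rec u (fun j zj => (G.phi_surj (m + j) zj).choose) j
  have hz : ∀ j, G.φ (m + j) (z (j + 1)) = z j :=
    fun j => (G.phi_surj (m + j) (z j)).choose_spec
  have hzd : ∀ j (h : m ≤ m + j), compMap G.φ h (z j) = u := by
    intro j
    induction j with
    | zero => intro h; rw [compMap_self]; rfl
    | succ j ih =>
      intro h
      rw [compMap_succ_top G.φ (Nat.le_add_right m j), hz j]
      exact ih _
  refine ⟨fun i => compMap G.φ (Nat.le_add_left i m) (z i), ?_, hzd m _⟩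
  intro i
  rw [compMap_succ_bot G.φ (Nat.le_add_left (i + 1) m) (by omega),
    compMap_succ_top G.φ (Nat.le_add_left i m), hz i]

variable {G} (f : G.limitSet → G.limitSet)
  (hf : ∀ x y : G.limitSet, f x = y ↔
      ∀ i, ((x : ∀ i, V i) i, (y : ∀ i, V i) i) ∈ G.E i)

include hf in
lemma f_apply (x : G.limitSet) (i : ℕ) :
    (↑(f x) : ∀ i, V i) i = G.tau i ((x : ∀ i, V i) (i + 1)) := by
  have h := (hf x (f x)).mp rfl
  rw [(f x).2 i]
  exact (G.tau_eq i _ _ (h (i + 1))).symm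

include hf in
lemma orbit_coord : ∀ (k : ℕ) {n j : ℕ} (hnj : n ≤ j), n + k ≤ j →
    ∀ (x : G.limitSet) (p : ℕ → V j),
      (∀ i, (p i, p (i + 1)) ∈ G.E j) → (x : ∀ i, V i) j = p 0 →
      (↑(f^[k] x) : ∀ i, V i) n = compMap G.φ hnj (p k) := by
  intro k
  induction k with
  | zero =>
    intro n j hnj _ x p _ hx0
    simpa [hx0] using G.limit_coe x.2 hnj
  | succ k ih =>
    intro n j hnj hk x p hp hx0
    obtain ⟨j', rfl⟩ : ∃ j', j = j' + 1 := ⟨j - 1, by omega⟩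
    rw [Function.iterate_succ_apply]
    have hqpath : ∀ i, (G.φ j' (p (i + 1)), G.φ j' (p (i + 1 + 1))) ∈ G.E j' :=
      fun i => (G.cover j').1 _ _ (hp (i + 1))
    have hy0 : (↑(f x) : ∀ i, V i) j' = G.φ j' (p (0 + 1)) := by
      rw [f_apply f hf x j']
      exact G.tau_eq j' _ _ (by rw [hx0]; exact hp 0)
    have := ih (n := n) (j := j') (by omega) (by omega) (f x)
      (fun i => G.φ j' (p (i + 1))) hqpath hy0
    rw [this]
    exact (compMap_succ_top G.φ _ hnj (p (k + 1))).symm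

end GraphCovering
end Aux

section Main
variable {V : ℕ → Type*} [∀ i, Fintype (V i)] [∀ i, TopologicalSpace (V i)]
  [∀ i, DiscreteTopology (V i)]

lemma isClosed_limitSet (G : GraphCovering V) : IsClosed G.limitSet := by
  have h : G.limitSet = ⋂ i, {x : ∀ i, V i | x i = G.φ i (x (i + 1))} := by
    ext x
    simp only [GraphCovering.limitSet, Set.mem_setOf_eq, Set.mem_iInter]
  rw [h]
  exact isClosed_iInter fun i =>
    isClosed_eq (continuous_apply i)
      (continuous_of_discreteTopology.comp (continuous_apply (i + 1)))


end Main

/-- Minimality criterion (necessity): if the inverse limit system is minimal,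
then for every `n` there is `m > n` such that every circuit of `G m` projects
onto all vertices of `G n`. -/
theorem circuit_condition_of_limit_minimal {V : ℕ → Type*} [∀ i, Fintype (V i)]
    [∀ i, TopologicalSpace (V i)] [∀ i, DiscreteTopology (V i)]
    (G : GraphCovering V)
    (f : G.limitSet → G.limitSet)
    (hf : ∀ x y : G.limitSet, f x = y ↔
      ∀ i, ((x : ∀ i, V i) i, (y : ∀ i, V i) i) ∈ G.E i)
    (hmin : ∀ x : G.limitSet, Dense (Set.range fun k : ℕ => f^[k] x)) :
    ∀ n : ℕ, ∃ m : ℕ, ∃ h : n < m,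
      ∀ (l : ℕ) (c : ℕ → V m), IsCircuit (G.E m) l c →
        ∀ v : V n, ∃ i ≤ l, compMap G.φ h.le (c i) = v := by
  classical
  intro n
  -- continuity of f
  have hfc : Continuous f := by
    apply continuous_induced_rng.mpr
    have h : (fun x : G.limitSet => ((f x : G.limitSet) : ∀ i, V i)) =
        fun x : G.limitSet => fun i => G.tau i ((x : ∀ i, V i) (i + 1)) := by
      funext x
      exact funext fun i => GraphCovering.f_apply f hf x i
    rw [show (Subtype.val ∘ f) = fun x : G.limitSet => ((f x : G.limitSet) : ∀ i, V i) from rfl, h]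
    exact continuous_pi fun i =>
      Continuous.comp (g := G.tau i)
        (f := fun x : G.limitSet => (x : ∀ i, V i) (i + 1))
        continuous_of_discreteTopology
        ((continuous_apply (i + 1)).comp continuous_subtype_val)
  haveI : CompactSpace G.limitSet :=
    isCompact_iff_compactSpace.mp (isClosed_limitSet G).isCompact
  -- for each vertex v of V n, a uniform bound on hitting time of {x | x n = v}
  have key : ∀ v : V n, ∃ N : ℕ, ∀ x : G.limitSet,
      ∃ k ≤ N, (↑(f^[k] x) : ∀ i, V i) n = v := by
    intro v
    obtain ⟨x₀, hx₀, hx₀n⟩ := G.exists_limit_point n v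
    set U : Set G.limitSet := {x | (x : ∀ i, V i) n = v} with hU
    have hUopen : IsOpen U :=
      (isOpen_discrete {v}).preimage ((continuous_apply n).comp continuous_subtype_val)
    have hcover : (Set.univ : Set G.limitSet) ⊆ ⋃ k : ℕ, f^[k] ⁻¹' U := by
      intro x _
      obtain ⟨y, hyU, hyr⟩ := (hmin x).inter_open_nonempty U hUopen ⟨⟨x₀, hx₀⟩, hx₀n⟩
      obtain ⟨k, rfl⟩ := hyr
      exact Set.mem_iUnion.mpr ⟨k, hyU⟩
    obtain ⟨t, ht⟩ := isCompact_univ.elim_finite_subcover (fun k => f^[k] ⁻¹' U)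
      (fun k => hUopen.preimage (hfc.iterate k)) hcover
    refine ⟨t.sup id, fun x => ?_⟩
    obtain ⟨k, hkt, hk⟩ := Set.mem_iUnion₂.mp (ht (Set.mem_univ x))
    exact ⟨k, Finset.le_sup (f := id) hkt, hk⟩
  choose N hN using key
  set Nmax : ℕ := (Finset.univ : Finset (V n)).sup N with hNmax
  refine ⟨n + Nmax + 1, by omega, ?_⟩
  intro l c hc v
  obtain ⟨hl, hcl, hedge, _⟩ := hc
  -- the periodic extension of the circuit is a bi-infinite path
  have hmod : ∀ a : ℕ, (a % l + 1) % l = (a + 1) % l := fun a => Nat.mod_add_mod a l 1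
  have hpath : ∀ k, (c (k % l), c ((k + 1) % l)) ∈ G.E (n + Nmax + 1) := by
    intro k
    have h1 : k % l < l := Nat.mod_lt _ (by omega)
    have he := hedge (k % l) h1
    rcases eq_or_lt_of_le (Nat.succ_le_of_lt h1) with heq' | hlt
    · have heq : k % l + 1 = l := heq'
      have h3 : (k + 1) % l = 0 := by rw [← hmod, heq, Nat.mod_self]
      have h4 : c l = c (k % l + 1) := by rw [heq]
      rw [h3, ← hcl, h4]
      exact he
    · have h3 : (k + 1) % l = k % l + 1 := by rw [← hmod, Nat.mod_eq_of_lt hlt]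
      rw [h3]
      exact he
  obtain ⟨x, hxmem, hx0⟩ := G.exists_limit_point (n + Nmax + 1) (c (0 % l))
  obtain ⟨k, hkN, hk⟩ := hN v ⟨x, hxmem⟩
  have hNv : N v ≤ Nmax := Finset.le_sup (Finset.mem_univ v)
  have horb := GraphCovering.orbit_coord f hf k (n := n) (j := n + Nmax + 1)
    (by omega) (by omega) ⟨x, hxmem⟩ (fun i => c (i % l)) hpath hx0
  refine ⟨k % l, le_of_lt (Nat.mod_lt _ (by omega)), ?_⟩
  rw [← horb]
  exact hk
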